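/- In the spined category Grph_m of simple graphs and graph monomorphisms (with spine the complete graphs K_n and proxy pushouts inherited from pushouts in Grph along monomorphisms), the clique-number map ω, sending a graph G to the number of vertices of its largest complete subgraph, is an S-functor: it is a functor to (ℕ, ≤) sending K_n to n and sending each proxy pushout square to a supremum. -/

import Mathlib

open CategoryTheory


/-- A spined category: a category with a spine `Ω : ℕ → C` and a proxy pushout
operation `P`, satisfying SC1 and SC2. -/
structure SpinedStruct (C : Type*) [Category C] where
  Ω : ℕ → C
  P : ∀ {n : ℕ} {G H : C}, (Ω n ⟶ G) → (Ω n ⟶ H) → C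
  inl : ∀ {n : ℕ} {G H : C} (g : Ω n ⟶ G) (h : Ω n ⟶ H), G ⟶ P g h
  inr : ∀ {n : ℕ} {G H : C} (g : Ω n ⟶ G) (h : Ω n ⟶ H), H ⟶ P g h
  sc1 : ∀ X : C, ∃ n : ℕ, Nonempty (X ⟶ Ω n)
  sc2 : ∀ {n : ℕ} {G G' H H' : C} (g : Ω n ⟶ G) (h : Ω n ⟶ H)
      (g' : G ⟶ G') (h' : H ⟶ H'),
      ∃! m : P g h ⟶ P (g ≫ g') (h ≫ h'),
        inl g h ≫ m = g' ≫ inl (g ≫ g') (h ≫ h') ∧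
        inr g h ≫ m = h' ≫ inr (g ≫ g') (h ≫ h')

/-- An S-functor on a spined category: a spinal functor to `Nat = (ℕ, ≤)`,
equivalently a monotone-under-morphisms assignment `s : ob C → ℕ` with
`s (Ω n) = n` and `s (P g h) = max (s G) (s H)`. -/
structure SFunctor {C : Type*} [Category C] (S : SpinedStruct C) where
  s : C → ℕ
  mono : ∀ {X Y : C}, (X ⟶ Y) → s X ≤ s Y
  spine : ∀ n : ℕ, s (S.Ω n) = n
  pp : ∀ {n : ℕ} {G H : C} (g : S.Ω n ⟶ G) (h : S.Ω n ⟶ H),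
      s (S.P g h) = max (s G) (s H)

/-- An object is pseudo-chordal if all S-functors agree on it. -/
def PseudoChordal {C : Type*} [Category C] (S : SpinedStruct C) (X : C) : Prop :=
  ∀ F G : SFunctor S, F.s X = G.s X

/-- The triangulation map `Δ(G) = min { s(H) | H pseudo-chordal, C(G,H) ≠ ∅ }`. -/
noncomputable def Delta {C : Type*} [Category C] (S : SpinedStruct C)
    (s : SFunctor S) (G : C) : ℕ :=
  sInf { k | ∃ H : C, PseudoChordal S H ∧ Nonempty (G ⟶ H) ∧ s.s H = k }

/-- Bundled finite simple graphs. -/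
structure Grph : Type 1 where
  V : Type
  [fin : Fintype V]
  G : SimpleGraph V

attribute [instance] Grph.fin

/-- The category of finite simple graphs and graph homomorphisms. -/
instance : Category Grph where
  Hom A B := A.G →g B.G
  id A := SimpleGraph.Hom.id
  comp f g := g.comp f

/-- The category of finite simple graphs and graph monomorphisms. -/
def GrphM : Type 1 := Grph

instance : Category GrphM where
  Hom A B := { f : (Grph.G A) →g (Grph.G B) // Function.Injective f }
  id A := ⟨SimpleGraph.Hom.id, fun _ _ h => h⟩
  comp f g := ⟨g.1.comp f.1, g.2.comp f.2⟩

/-- The complete graph on `n` vertices, as an object of `GrphM`. -/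
def Kn (n : ℕ) : GrphM := { V := Fin n, G := (⊤ : SimpleGraph (Fin n)) }

/-- The clique number of an object of `GrphM`. -/
noncomputable def cliqueNumM (A : GrphM) : ℕ := (Grph.G A).cliqueNum

section Aux

open SimpleGraph

/-- Any graph homomorphism is monotone for the clique number. -/
lemma hom_cliqueNum_le {α β : Type} [Fintype α] [Fintype β]
    {G : SimpleGraph α} {H : SimpleGraph β} (f : G →g H) :
    G.cliqueNum ≤ H.cliqueNum := by
  classical
  obtain ⟨s, hs⟩ := exists_isNClique_cliqueNum (G := G)
  have hinj : Set.InjOn f s := by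
    intro a ha b hb hab
    by_contra hne
    exact H.irrefl (hab ▸ f.map_adj (hs.1 ha hb hne))
  have ht : H.IsClique (s.image f : Finset β) := by
    intro x hx y hy hxy
    simp only [Finset.coe_image, Set.mem_image, Finset.mem_coe] at hx hy
    obtain ⟨a, ha, rfl⟩ := hx
    obtain ⟨b, hb, rfl⟩ := hy
    have hab : a ≠ b := fun e => hxy (by rw [e])
    exact f.map_adj (hs.1 ha hb hab)
  calc G.cliqueNum = s.card := hs.2.symm
    _ = (s.image f).card := (Finset.card_image_of_injOn hinj).symm
    _ ≤ H.cliqueNum := IsClique.card_le_cliqueNum (tc := ht)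

lemma top_cliqueNum (n : ℕ) : (⊤ : SimpleGraph (Fin n)).cliqueNum = n := by
  classical
  have hm : (⊤ : SimpleGraph (Fin n)).IsMaximumClique Finset.univ := by
    constructor
    · intro a _ b _ hab
      exact hab
    · intro t _
      exact Finset.card_le_univ t
  have := maximumClique_card_eq_cliqueNum _ hm
  simpa using this.symm

section PushoutConstruction

variable {ι α β : Type} (g : ι → α) (h : ι → β)

/-- The gluing relation on `α ⊕ β` identifying `g x` with `h x`. -/
def prel (u v : α ⊕ β) : Prop :=
  u = v ∨ (∃ x, u = Sum.inl (g x) ∧ v = Sum.inr (h x))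
        ∨ (∃ x, u = Sum.inr (h x) ∧ v = Sum.inl (g x))

variable (hg : Function.Injective g) (hh : Function.Injective h)

/-- For injective `g`, `h`, the gluing relation is an equivalence relation. -/
def psetoid : Setoid (α ⊕ β) where
  r := prel g h
  iseqv := by
    constructor
    · intro u; exact Or.inl rfl
    · rintro u v (rfl | ⟨x, rfl, rfl⟩ | ⟨x, rfl, rfl⟩)
      · exact Or.inl rfl
      · exact Or.inr (Or.inr ⟨x, rfl, rfl⟩)
      · exact Or.inr (Or.inl ⟨x, rfl, rfl⟩)
    · rintro u v w (rfl | ⟨x, rfl, rfl⟩ | ⟨x, rfl, rfl⟩) hvw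
      · exact hvw
      · rcases hvw with rfl | ⟨y, hy, rfl⟩ | ⟨y, hy, rfl⟩
        · exact Or.inr (Or.inl ⟨x, rfl, rfl⟩)
        · cases hy
        · obtain rfl : x = y := hh (Sum.inr.inj hy)
          exact Or.inl rfl
      · rcases hvw with rfl | ⟨y, hy, rfl⟩ | ⟨y, hy, rfl⟩
        · exact Or.inr (Or.inr ⟨x, rfl, rfl⟩)
        · obtain rfl : x = y := hg (Sum.inl.inj hy)
          exact Or.inl rfl
        · cases hy

/-- Vertices of the glued graph. -/
def PVert : Type := Quotient (psetoid g h hg hh)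

/-- Left injection into the glued vertex set. -/
def qla (a : α) : PVert g h hg hh := Quotient.mk (psetoid g h hg hh) (Sum.inl a)

/-- Right injection into the glued vertex set. -/
def qrb (b : β) : PVert g h hg hh := Quotient.mk (psetoid g h hg hh) (Sum.inr b)

lemma qla_inj {a a' : α} (e : qla g h hg hh a = qla g h hg hh a') : a = a' := by
  rcases Quotient.exact e with e' | ⟨x, hx, hx'⟩ | ⟨x, hx, hx'⟩
  · exact Sum.inl.inj e'
  · cases hx'
  · cases hx

lemma qrb_inj {b b' : β} (e : qrb g h hg hh b = qrb g h hg hh b') : b = b' := by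
  rcases Quotient.exact e with e' | ⟨x, hx, hx'⟩ | ⟨x, hx, hx'⟩
  · exact Sum.inr.inj e'
  · cases hx
  · cases hx'

lemma qla_eq_qrb {a : α} {b : β} (e : qla g h hg hh a = qrb g h hg hh b) :
    ∃ x, a = g x ∧ b = h x := by
  rcases Quotient.exact e with e' | ⟨x, hx, hx'⟩ | ⟨x, hx, hx'⟩
  · cases e'
  · exact ⟨x, Sum.inl.inj hx, Sum.inr.inj hx'⟩
  · cases hx

lemma qla_glue (x : ι) : qla g h hg hh (g x) = qrb g h hg hh (h x) :=
  Quotient.sound (Or.inr (Or.inl ⟨x, rfl, rfl⟩))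

lemma pvert_cases (q : PVert g h hg hh) :
    (∃ a, q = qla g h hg hh a) ∨ (∃ b, q = qrb g h hg hh b) := by
  induction q using Quotient.ind with
  | _ u =>
    rcases u with a | b
    · exact Or.inl ⟨a, rfl⟩
    · exact Or.inr ⟨b, rfl⟩

variable (GA : SimpleGraph α) (GB : SimpleGraph β)

/-- The glued graph: edges come from `GA` or from `GB`. -/
def QG : SimpleGraph (PVert g h hg hh) where
  Adj q q' :=
    (∃ a a', GA.Adj a a' ∧ q = qla g h hg hh a ∧ q' = qla g h hg hh a') ∨
    (∃ b b', GB.Adj b b' ∧ q = qrb g h hg hh b ∧ q' = qrb g h hg hh b')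
  symm := by
    constructor
    rintro q q' (⟨a, a', hadj, rfl, rfl⟩ | ⟨b, b', hadj, rfl, rfl⟩)
    · exact Or.inl ⟨a', a, hadj.symm, rfl, rfl⟩
    · exact Or.inr ⟨b', b, hadj.symm, rfl, rfl⟩
  loopless := by
    constructor
    rintro q (⟨a, a', hadj, rfl, e⟩ | ⟨b, b', hadj, rfl, e⟩)
    · obtain rfl := qla_inj g h hg hh e.symm
      exact GA.irrefl hadj
    · obtain rfl := qrb_inj g h hg hh e.symm
      exact GB.irrefl hadj

/-- The left inclusion is a graph homomorphism. -/
def qaHom : GA →g QG g h hg hh GA GB where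
  toFun := qla g h hg hh
  map_rel' := fun hadj => Or.inl ⟨_, _, hadj, rfl, rfl⟩

/-- The right inclusion is a graph homomorphism. -/
def qbHom : GB →g QG g h hg hh GA GB where
  toFun := qrb g h hg hh
  map_rel' := fun hadj => Or.inr ⟨_, _, hadj, rfl, rfl⟩

/-- Key bound: if the span maps have complete image (pairwise adjacent),
the clique number of the glued graph is at most the max of the two sides. -/
lemma qg_cliqueNum_le [Fintype α] [Fintype β]
    (hgc : ∀ x x', x ≠ x' → GA.Adj (g x) (g x'))
    (hhc : ∀ x x', x ≠ x' → GB.Adj (h x) (h x')) :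
    haveI : Fintype (PVert g h hg hh) := @Fintype.ofFinite _ (Quotient.finite _)
    (QG g h hg hh GA GB).cliqueNum ≤ max GA.cliqueNum GB.cliqueNum := by
  classical
  haveI : Fintype (PVert g h hg hh) := @Fintype.ofFinite _ (Quotient.finite _)
  obtain ⟨s, hs⟩ := exists_isNClique_cliqueNum (G := QG g h hg hh GA GB)
  rw [← hs.2]
  have hdich : (∀ q ∈ s, ∃ a, q = qla g h hg hh a) ∨
      (∀ q ∈ s, ∃ b, q = qrb g h hg hh b) := by
    by_contra hcon
    push_neg at hcon
    obtain ⟨⟨q1, hq1s, hq1⟩, ⟨q2, hq2s, hq2⟩⟩ := hcon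
    obtain ⟨b1, rfl⟩ := (pvert_cases g h hg hh q1).resolve_left
      (by rintro ⟨a, rfl⟩; exact hq1 a rfl)
    obtain ⟨a2, rfl⟩ := (pvert_cases g h hg hh q2).resolve_right
      (by rintro ⟨b, rfl⟩; exact hq2 b rfl)
    have hne : qrb g h hg hh b1 ≠ qla g h hg hh a2 := by
      intro e
      exact hq1 a2 e
    rcases hs.1 hq1s hq2s hne with ⟨a, a', _, e1, _⟩ | ⟨b, b', _, _, e2⟩
    · exact hq1 a e1
    · exact hq2 b' e2
  rcases hdich with hall | hall
  · refine le_trans ?_ (le_max_left _ _)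
    set t : Finset α := Finset.univ.filter (fun a => qla g h hg hh a ∈ s) with ht
    have htc : GA.IsClique t := by
      intro a hat a' hat' hne
      simp only [ht, Finset.coe_filter, Set.mem_setOf_eq, Finset.mem_univ,
        true_and] at hat hat'
      have hqne : qla g h hg hh a ≠ qla g h hg hh a' :=
        fun e => hne (qla_inj g h hg hh e)
      rcases hs.1 hat hat' hqne with ⟨a0, a0', hadj, e1, e2⟩ | ⟨b, b', _, e1, e2⟩
      · obtain rfl := qla_inj g h hg hh e1
        obtain rfl := qla_inj g h hg hh e2
        exact hadj
      · obtain ⟨x, rfl, rfl⟩ := qla_eq_qrb g h hg hh e1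
        obtain ⟨x', rfl, rfl⟩ := qla_eq_qrb g h hg hh e2
        have hxne : x ≠ x' := fun e => hne (by rw [e])
        exact hgc x x' hxne
    have hsub : s ⊆ t.image (qla g h hg hh) := by
      intro q hq
      obtain ⟨a, rfl⟩ := hall q hq
      exact Finset.mem_image_of_mem _ (by simp [ht, hq])
    calc s.card ≤ (t.image (qla g h hg hh)).card := Finset.card_le_card hsub
      _ ≤ t.card := Finset.card_image_le
      _ ≤ GA.cliqueNum := IsClique.card_le_cliqueNum (tc := htc)
  · refine le_trans ?_ (le_max_right _ _)
    set t : Finset β := Finset.univ.filter (fun b => qrb g h hg hh b ∈ s) with ht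
    have htc : GB.IsClique t := by
      intro b hbt b' hbt' hne
      simp only [ht, Finset.coe_filter, Set.mem_setOf_eq, Finset.mem_univ,
        true_and] at hbt hbt'
      have hqne : qrb g h hg hh b ≠ qrb g h hg hh b' :=
        fun e => hne (qrb_inj g h hg hh e)
      rcases hs.1 hbt hbt' hqne with ⟨a, a', _, e1, e2⟩ | ⟨b0, b0', hadj, e1, e2⟩
      · obtain ⟨x, rfl, rfl⟩ := qla_eq_qrb g h hg hh e1.symm
        obtain ⟨x', rfl, rfl⟩ := qla_eq_qrb g h hg hh e2.symm
        have hxne : x ≠ x' := fun e => hne (by rw [e])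
        exact hhc x x' hxne
      · obtain rfl := qrb_inj g h hg hh e1
        obtain rfl := qrb_inj g h hg hh e2
        exact hadj
    have hsub : s ⊆ t.image (qrb g h hg hh) := by
      intro q hq
      obtain ⟨b, rfl⟩ := hall q hq
      exact Finset.mem_image_of_mem _ (by simp [ht, hq])
    calc s.card ≤ (t.image (qrb g h hg hh)).card := Finset.card_le_card hsub
      _ ≤ t.card := Finset.card_image_le
      _ ≤ GB.cliqueNum := IsClique.card_le_cliqueNum (tc := htc)

end PushoutConstruction

end Aux

/-- In `Grph_m` (spine the complete graphs, proxy pushouts the pushouts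
computed in `Grph`), the clique number is an S-functor. -/
theorem cliqueNum_sFunctor (S : SpinedStruct GrphM)
    (hΩ : ∀ n : ℕ, S.Ω n = Kn n)
    (hP : ∀ {n : ℕ} {A B : GrphM} (g : S.Ω n ⟶ A) (h : S.Ω n ⟶ B),
      IsPushout (C := Grph) g.1 h.1 (S.inl g h).1 (S.inr g h).1) :
    ∃ F : SFunctor S, F.s = cliqueNumM := by
  classical
  letI : ∀ X : GrphM, Fintype (Grph.V X) := fun X => Grph.fin X
  refine ⟨⟨cliqueNumM, ?_, ?_, ?_⟩, rfl⟩
  · intro X Y f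
    exact hom_cliqueNum_le f.1
  · intro n
    rw [hΩ n]
    show (⊤ : SimpleGraph (Fin n)).cliqueNum = n
    exact top_cliqueNum n
  · intro n A B g h
    -- the spine object is a complete graph
    have hc : ∀ x x' : Grph.V (S.Ω n), x ≠ x' → (Grph.G (S.Ω n)).Adj x x' := by
      rw [hΩ n]
      intro x x' hx
      exact hx
    have hgc : ∀ x x', x ≠ x' → (Grph.G A).Adj (g.1 x) (g.1 x') :=
      fun x x' hx => g.1.map_adj (hc x x' hx)
    have hhc : ∀ x x', x ≠ x' → (Grph.G B).Adj (h.1 x) (h.1 x') :=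
      fun x x' hx => h.1.map_adj (hc x x' hx)
    haveI : Fintype (PVert (⇑g.1) (⇑h.1) g.2 h.2) :=
      @Fintype.ofFinite _ (Quotient.finite _)
    -- the concrete glued graph
    set Q : Grph := { V := PVert (⇑g.1) (⇑h.1) g.2 h.2,
                      G := QG (⇑g.1) (⇑h.1) g.2 h.2 (Grph.G A) (Grph.G B) } with hQ
    have w : (qaHom (⇑g.1) (⇑h.1) g.2 h.2 (Grph.G A) (Grph.G B)).comp g.1
        = (qbHom (⇑g.1) (⇑h.1) g.2 h.2 (Grph.G A) (Grph.G B)).comp h.1 :=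
      RelHom.ext fun x => qla_glue (⇑g.1) (⇑h.1) g.2 h.2 x
    have le1 : cliqueNumM (S.P g h) ≤ (Grph.G Q).cliqueNum :=
      hom_cliqueNum_le ((hP g h).desc (W := Q)
        (qaHom (⇑g.1) (⇑h.1) g.2 h.2 (Grph.G A) (Grph.G B))
        (qbHom (⇑g.1) (⇑h.1) g.2 h.2 (Grph.G A) (Grph.G B)) w)
    have le2 : (Grph.G Q).cliqueNum ≤ max (cliqueNumM A) (cliqueNumM B) :=
      qg_cliqueNum_le (⇑g.1) (⇑h.1) g.2 h.2 (Grph.G A) (Grph.G B) hgc hhc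
    have geA : cliqueNumM A ≤ cliqueNumM (S.P g h) := hom_cliqueNum_le (S.inl g h).1
    have geB : cliqueNumM B ≤ cliqueNumM (S.P g h) := hom_cliqueNum_le (S.inr g h).1
    exact le_antisymm (le_trans le1 le2) (max_le geA geB)
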